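/- Suppose f : ℝ_{>0} → ℝ is differentiable with f(1) = 0 and f''(x) + f'(x)/x ≤ 0 wherever f is twice differentiable, and f' < 0. Then for all x > 0 and any integer k ≥ 1: f(x) + k·f'(x)·x - k·f'(x)·x^{1+1/k} ≥ 0. -/

import Mathlib

/-- If `f(1) = 0`, `f' < 0` and `f'' + f'/x ≤ 0` on `ℝ_{>0}`, then for all
`x > 0` and integers `k ≥ 1`: `f(x) + k f'(x) x - k f'(x) x^{1+1/k} ≥ 0`. -/
theorem stmt16 (f : ℝ → ℝ)
    (hdiff : DifferentiableOn ℝ f (Set.Ioi 0))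
    (hdiff' : DifferentiableOn ℝ (deriv f) (Set.Ioi 0))
    (hf1 : f 1 = 0)
    (hf' : ∀ x : ℝ, 0 < x → deriv f x < 0)
    (hf'' : ∀ x : ℝ, 0 < x → deriv (deriv f) x + deriv f x / x ≤ 0) :
    ∀ x : ℝ, 0 < x → ∀ k : ℕ, 1 ≤ k →
      0 ≤ f x + (k : ℝ) * deriv f x * x
          - (k : ℝ) * deriv f x * x ^ (1 + 1 / (k : ℝ)) := by
  intro x hx k hk
  set c := x * deriv f x with hc
  have hcneg : c < 0 := mul_neg_of_pos_of_neg hx (hf' x hx)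
  -- g(s) = s * f'(s) is antitone on Ioi 0
  have hg : AntitoneOn (fun s => s * deriv f s) (Set.Ioi 0) := by
    apply antitoneOn_of_deriv_nonpos (convex_Ioi 0)
    · exact continuousOn_id.mul hdiff'.continuousOn
    · rw [interior_Ioi]
      exact differentiableOn_id.mul hdiff'
    · intro s hs
      rw [interior_Ioi] at hs
      have hs0 : (0:ℝ) < s := hs
      have hfd : DifferentiableAt ℝ (deriv f) s :=
        hdiff'.differentiableAt (isOpen_Ioi.mem_nhds hs)
      rw [deriv_fun_mul (c := fun s => s) differentiableAt_id hfd]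
      have h2 := hf'' s hs0
      have h3 : s * (deriv (deriv f) s + deriv f s / s) ≤ 0 :=
        mul_nonpos_of_nonneg_of_nonpos hs0.le h2
      rw [mul_add, mul_div_cancel₀ _ hs0.ne'] at h3
      simp only [deriv_id'', one_mul]
      linarith
  have hcont : ContinuousOn f (Set.Ioi 0) := hdiff.continuousOn
  have hFd : ∀ s : ℝ, 0 < s →
      HasDerivAt (fun s => f s - c * Real.log s) (deriv f s - c / s) s := by
    intro s hs
    have h1 : HasDerivAt f (deriv f s) s :=
      (hdiff.differentiableAt (isOpen_Ioi.mem_nhds hs)).hasDerivAt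
    have h2 : HasDerivAt Real.log s⁻¹ s := Real.hasDerivAt_log hs.ne'
    have := h1.sub (h2.const_mul c)
    rw [div_eq_mul_inv]; exact this
  have hFcont : ∀ a b : ℝ, 0 < a →
      ContinuousOn (fun s => f s - c * Real.log s) (Set.Icc a b) := by
    intro a b ha
    intro s hs
    exact ((hFd s (lt_of_lt_of_le ha hs.1)).continuousAt).continuousWithinAt
  have hkey : c * Real.log x ≤ f x := by
    rcases le_or_gt 1 x with h1x | h1x
    · have hmono : MonotoneOn (fun s => f s - c * Real.log s) (Set.Icc 1 x) := by
        apply monotoneOn_of_deriv_nonneg (convex_Icc 1 x) (hFcont 1 x one_pos)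
        · rw [interior_Icc]
          intro s hs
          exact ((hFd s (lt_trans one_pos hs.1)).differentiableAt).differentiableWithinAt
        · intro s hs
          rw [interior_Icc] at hs
          have hs0 : (0:ℝ) < s := lt_trans one_pos hs.1
          rw [(hFd s hs0).deriv]
          have hgs : x * deriv f x ≤ s * deriv f s :=
            hg (Set.mem_Ioi.2 hs0) (Set.mem_Ioi.2 hx) hs.2.le
          rw [sub_nonneg, div_le_iff₀ hs0]
          nlinarith [hgs, hc]
      have := hmono (Set.left_mem_Icc.2 h1x) (Set.right_mem_Icc.2 h1x) h1x
      simp [hf1, Real.log_one] at this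
      linarith
    · have hanti : AntitoneOn (fun s => f s - c * Real.log s) (Set.Icc x 1) := by
        apply antitoneOn_of_deriv_nonpos (convex_Icc x 1) (hFcont x 1 hx)
        · rw [interior_Icc]
          intro s hs
          exact ((hFd s (lt_trans hx hs.1)).differentiableAt).differentiableWithinAt
        · intro s hs
          rw [interior_Icc] at hs
          have hs0 : (0:ℝ) < s := lt_trans hx hs.1
          rw [(hFd s hs0).deriv]
          have hgs : s * deriv f s ≤ x * deriv f x :=
            hg (Set.mem_Ioi.2 hx) (Set.mem_Ioi.2 hs0) hs.1.le
          rw [sub_nonpos, le_div_iff₀ hs0]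
          nlinarith [hgs, hc]
      have := hanti (Set.left_mem_Icc.2 h1x.le) (Set.right_mem_Icc.2 h1x.le) h1x.le
      simp [hf1, Real.log_one] at this
      linarith
  set t := x ^ (1 / (k:ℝ)) with htdef
  have hk0 : (0:ℝ) < (k:ℝ) := by exact_mod_cast hk
  have ht : (0:ℝ) < t := Real.rpow_pos_of_pos hx _
  have hlog : Real.log t = (1/(k:ℝ)) * Real.log x := Real.log_rpow hx _
  have hle : Real.log t ≤ t - 1 := Real.log_le_sub_one_of_pos ht
  have hx1 : x ^ (1 + 1/(k:ℝ)) = x * t := by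
    rw [htdef, Real.rpow_add hx, Real.rpow_one]
  have hlogx : (k:ℝ) * Real.log t = Real.log x := by
    rw [hlog]; field_simp
  have hkey2 : c * ((k:ℝ) * Real.log t) ≤ f x := by rw [hlogx]; exact hkey
  have h4 : 0 ≤ (k:ℝ) * (-c) * ((t - 1) - Real.log t) :=
    mul_nonneg (mul_nonneg hk0.le (by linarith)) (by linarith)
  rw [hx1, hc] at *
  nlinarith [h4, hkey2]
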